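/- Let k be an algebraically closed field of characteristic different from 5, and let z ∈ k⁵ be nonzero with z_i² = z_{i+1} z_{i+4} for all i ∈ ℤ/5 (indices mod 5). Then z₀ ≠ 0 and there exists t ∈ k with t⁵ = 1 such that z = z₀·(1, t, t², t³, t⁴). -/

import Mathlib

/-- Over an algebraically closed field of characteristic `≠ 5`, a nonzero solution of
the quadrics `z_i² = z_{i+1} z_{i+4}` (indices mod 5) has `z₀ ≠ 0` and is of the form
`z₀·(1, t, t², t³, t⁴)` for some fifth root of unity `t`. -/
theorem quadric_solutions (k : Type) [Field k] [IsAlgClosed k] (h5 : (5 : k) ≠ 0)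
    (z : ZMod 5 → k) (hz : z ≠ 0) (h : ∀ i : ZMod 5, z i ^ 2 = z (i + 1) * z (i + 4)) :
    z 0 ≠ 0 ∧ ∃ t : k, t ^ 5 = 1 ∧ ∀ i : ZMod 5, z i = z 0 * t ^ i.val := by
  have step : ∀ m : ZMod 5, z m = 0 → z (m + 1) = 0 := by
    intro m hm
    have hh := h (m + 1)
    rw [show m + 1 + 4 = m + 5 by ring, show (5 : ZMod 5) = 0 from by decide,
      add_zero, hm, mul_zero] at hh
    exact pow_eq_zero_iff (two_ne_zero) |>.mp hh
  have key : ∀ i : ZMod 5, z i ≠ 0 := by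
    by_contra hc
    push_neg at hc
    obtain ⟨i, hi⟩ := hc
    apply hz
    funext j
    have hall : ∀ n : ℕ, z (i + (n : ZMod 5)) = 0 := by
      intro n
      induction n with
      | zero => simpa using hi
      | succ n ih =>
        have := step _ ih
        rw [add_assoc] at this
        simpa using this
    have := hall ((j - i).val)
    rwa [ZMod.natCast_val, ZMod.cast_id, add_sub_cancel] at this
  have a0 := key 0
  have a1 := key 1
  have a2 := key 2
  have a3 := key 3
  have e0 : z 0 ^ 2 = z 1 * z 4 := by have := h 0; convert this using 3 <;> decide
  have e1 : z 1 ^ 2 = z 2 * z 0 := by have := h 1; convert this using 3 <;> decide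
  have e2 : z 2 ^ 2 = z 3 * z 1 := by have := h 2; convert this using 3 <;> decide
  have e3 : z 3 ^ 2 = z 4 * z 2 := by have := h 3; convert this using 3 <;> decide
  have hc2 : z 2 = z 1 ^ 2 / z 0 := by field_simp; linear_combination -e1
  have hc3' : z 3 = z 2 ^ 2 / z 1 := by field_simp; linear_combination -e2
  have hc3 : z 3 = z 1 ^ 3 / z 0 ^ 2 := by rw [hc3', hc2]; field_simp
  have hc4' : z 4 = z 3 ^ 2 / z 2 := by field_simp; linear_combination -e3
  have hc4 : z 4 = z 1 ^ 4 / z 0 ^ 3 := by rw [hc4', hc3, hc2]; field_simp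
  have h55 : z 1 ^ 5 = z 0 ^ 5 := by
    have := e0
    rw [hc4] at this
    field_simp at this
    linear_combination -this
  refine ⟨a0, z 1 / z 0, by field_simp; linear_combination h55, ?_⟩
  intro i
  fin_cases i
  · show z 0 = z 0 * (z 1 / z 0) ^ 0
    simp
  · show z 1 = z 0 * (z 1 / z 0) ^ 1
    field_simp
  · show z 2 = z 0 * (z 1 / z 0) ^ 2
    rw [hc2]; field_simp
  · show z 3 = z 0 * (z 1 / z 0) ^ 3
    rw [hc3]; field_simp
  · show z 4 = z 0 * (z 1 / z 0) ^ 4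
    rw [hc4]; field_simp
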